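/- Let B ⊂ ℝ² be a bounded region with nonempty interior whose boundary ∂B is the image of a simple closed C² arclength-parametrized curve with bounded curvature, and let 1 ≤ q < ∞. Then ∫_{ℝ²} |h|^{−(2+q)} (∫_{ℝ²} |χ_B(x+2h) − 2χ_B(x+h) + χ_B(x)|^q dx) dh = ∞; in particular, the characteristic function χ_B does not belong to the Besov space B¹_{q,q}(ℝ²). -/

import Mathlib

open MeasureTheory Real Filter Set ENNReal

noncomputable section

/-- Partial derivative in the first coordinate. -/
def pd1 (f : ℝ × ℝ → ℝ) : ℝ × ℝ → ℝ := fun x => deriv (fun t => f (t, x.2)) x.1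

/-- Partial derivative in the second coordinate. -/
def pd2 (f : ℝ × ℝ → ℝ) : ℝ × ℝ → ℝ := fun x => deriv (fun t => f (x.1, t)) x.2

/-- The `L²(ℝ²)` inner product of two real-valued functions. -/
def L2inner (f g : ℝ × ℝ → ℝ) : ℝ := ∫ x : ℝ × ℝ, f x * g x

/-- The open unit square `(0,1)²`. -/
def unitSq : Set (ℝ × ℝ) := Ioo (0:ℝ) 1 ×ˢ Ioo (0:ℝ) 1

/-- `B` is a region whose boundary is the image of a simple closed `C^n` curve,
parametrized by arclength (period `len`), with curvature bounded by `v`. -/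
def IsCartoonRegion (n : ℕ∞) (v : ℝ) (B : Set (ℝ × ℝ)) : Prop :=
  ∃ (len : ℝ) (γ : ℝ → ℝ × ℝ), 0 < len ∧ ContDiff ℝ n γ ∧
    Function.Periodic γ len ∧
    (∀ s ∈ Ico (0:ℝ) len, ∀ t ∈ Ico (0:ℝ) len, γ s = γ t → s = t) ∧
    (∀ t, ‖deriv γ t‖ = 1) ∧
    (∀ t, ‖deriv (deriv γ) t‖ ≤ v) ∧
    frontier B = range γ

/-- `f = g₁ + χ_B g₂` is a cartoon-like function with the given data. -/
def CartoonWith (n : ℕ∞) (v : ℝ) (g₁ g₂ : ℝ × ℝ → ℝ) (B : Set (ℝ × ℝ))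
    (f : ℝ × ℝ → ℝ) : Prop :=
  ContDiff ℝ n g₁ ∧ ContDiff ℝ n g₂ ∧
  tsupport g₁ ⊆ unitSq ∧ tsupport g₂ ⊆ unitSq ∧ B ⊆ unitSq ∧
  IsCartoonRegion n v B ∧
  f = fun x => g₁ x + B.indicator (fun _ => (1:ℝ)) x * g₂ x

/-- `f` is cartoon-like with discontinuity region `B`. -/
def CartoonWithB (n : ℕ∞) (v : ℝ) (B : Set (ℝ × ℝ)) (f : ℝ × ℝ → ℝ) : Prop :=
  ∃ g₁ g₂, CartoonWith n v g₁ g₂ B f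

/-- `f ∈ E^n(v)`: the class of cartoon-like functions. -/
def Cartoon (n : ℕ∞) (v : ℝ) (f : ℝ × ℝ → ℝ) : Prop :=
  ∃ B, CartoonWithB n v B f

/-- `w` is the weak partial derivative `∂₁^a ∂₂^b u`. -/
def IsWeakPartialDeriv (a b : ℕ) (u w : ℝ × ℝ → ℝ) : Prop :=
  ∀ φ : ℝ × ℝ → ℝ, ContDiff ℝ (⊤ : ℕ∞) φ → HasCompactSupport φ →
    ∫ x : ℝ × ℝ, u x * (pd1^[a] (pd2^[b] φ)) x = (-1 : ℝ) ^ (a + b) * ∫ x : ℝ × ℝ, w x * φ x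

/-- `u ∈ E^{l,n}(v)`: all weak derivatives of order `l` exist and are cartoon-like of
smoothness `n`. -/
def MemElClass (l : ℕ) (n : ℕ∞) (v : ℝ) (u : ℝ × ℝ → ℝ) : Prop :=
  MemLp u 2 (volume : Measure (ℝ × ℝ)) ∧
  ∀ a b : ℕ, a + b = l → ∃ w, IsWeakPartialDeriv a b u w ∧ Cartoon n v w

/-- The shearlet elements `ψ_{j,k,m,ι}` for `ι = 1` (horizontal cone) and `ι = -1`
(vertical cone). -/
def shearEl (ψ : ℝ × ℝ → ℝ) (c₁ c₂ : ℝ) (j : ℕ) (k : ℤ) (m : ℤ × ℤ) (ι : ℤ) :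
    ℝ × ℝ → ℝ := fun x =>
  if ι = 1 then
    (2:ℝ) ^ (3 * (j:ℝ) / 4) *
      ψ ((2:ℝ) ^ (j:ℝ) * x.1 + (k:ℝ) * (2:ℝ) ^ ((j:ℝ)/2) * x.2 - c₁ * (m.1 : ℝ),
         (2:ℝ) ^ ((j:ℝ)/2) * x.2 - c₂ * (m.2 : ℝ))
  else
    (2:ℝ) ^ (3 * (j:ℝ) / 4) *
      ψ ((k:ℝ) * (2:ℝ) ^ ((j:ℝ)/2) * x.1 + (2:ℝ) ^ (j:ℝ) * x.2 - c₁ * (m.2 : ℝ),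
         (2:ℝ) ^ ((j:ℝ)/2) * x.1 - c₂ * (m.1 : ℝ))

/-- Indices `(j,k,m,ι)` of the cone-adapted shearlet system. -/
abbrev ShearIdx : Type := ℕ × ℤ × (ℤ × ℤ) × ℤ

/-- The admissibility condition on shearlet indices: `ι ∈ {0,1,-1}`, with `j = k = 0`
in the coarse case `ι = 0`, and `|k| ≤ 2^⌈j/2⌉` in the cone cases. -/
def inLambda (p : ShearIdx) : Prop :=
  (p.2.2.2 = 0 ∧ p.1 = 0 ∧ p.2.1 = 0) ∨
  ((p.2.2.2 = 1 ∨ p.2.2.2 = -1) ∧ |p.2.1| ≤ 2 ^ ((p.1 + 1) / 2))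

/-- The index set `Λ` of the cone-adapted shearlet system. -/
def Lambda : Type := {p : ShearIdx // inLambda p}

/-- The full cone-adapted shearlet system `SH(φ, ψ, ψ̃, c)`. -/
def shearSys (φ ψ : ℝ × ℝ → ℝ) (c₁ c₂ : ℝ) (p : ShearIdx) : ℝ × ℝ → ℝ :=
  if p.2.2.2 = 0 then fun x => φ (x.1 - c₁ * (p.2.2.1.1 : ℝ), x.2 - c₁ * (p.2.2.1.2 : ℝ))
  else shearEl ψ c₁ c₂ p.1 p.2.1 p.2.2.1 p.2.2.2

/-- `θ(x₁,x₂) = θ₁(x₁)θ₂(x₂)` is separable. -/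
def SeparableFun (θ : ℝ × ℝ → ℝ) : Prop :=
  ∃ θ₁ θ₂ : ℝ → ℝ, ∀ x : ℝ × ℝ, θ x = θ₁ x.1 * θ₂ x.2

/-- The 2D Fourier transform. -/
def fourier2 (θ : ℝ × ℝ → ℝ) (ξ : ℝ × ℝ) : ℂ :=
  ∫ x : ℝ × ℝ, Complex.exp (-2 * Real.pi * Complex.I * (x.1 * ξ.1 + x.2 * ξ.2)) * (θ x : ℂ)

/-- The Fourier decay conditions (i) and (ii) on the shearlet generator `θ`. -/
def FourierDecayConds (θ : ℝ × ℝ → ℝ) : Prop :=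
  ∃ (τ ν C₀ : ℝ) (h : ℝ → ℝ), 5 < τ ∧ 4 ≤ ν ∧ 0 < C₀ ∧ Integrable h ∧
    (∀ ξ : ℝ × ℝ, ξ.2 ≠ 0 → ‖fourier2 θ ξ‖ ≤
      C₀ * min 1 (|ξ.1| ^ τ) * min 1 (|ξ.1| ^ (-ν)) * min 1 (|ξ.2| ^ (-ν))) ∧
    (∀ ξ : ℝ × ℝ, ξ.1 ≠ 0 → ‖deriv (fun t => fourier2 θ (ξ.1, t)) ξ.2‖ ≤
      |h ξ.1| * (1 + |ξ.2 / ξ.1|) ^ (-ν))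

/-- `θ` has `M` vanishing moments in the `x₁`-direction. -/
def VanishingMomentsX1 (M : ℕ) (θ : ℝ × ℝ → ℝ) : Prop :=
  ∀ x₂ : ℝ, ∀ n : ℕ, n < M → ∫ t : ℝ, t ^ n * θ (t, x₂) = 0

/-- Unconditional convergence of `∑ F i` to `g` in `L²(ℝ²)`. -/
def HasL2Sum {I : Type*} (F : I → ℝ × ℝ → ℝ) (g : ℝ × ℝ → ℝ) : Prop :=
  Tendsto (fun s : Finset I => eLpNorm (fun x => g x - ∑ i ∈ s, F i x) 2 volume)
    atTop (nhds 0)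

/-- `(Ψ i)` is a frame for `L²(ℝ²)`. -/
def IsFrameFamily {I : Type*} (Ψ : I → ℝ × ℝ → ℝ) : Prop :=
  ∃ A B : ℝ, 0 < A ∧ A ≤ B ∧ ∀ f : ℝ × ℝ → ℝ, MemLp f 2 (volume : Measure (ℝ × ℝ)) →
    A * ∫ x : ℝ × ℝ, f x ^ 2 ≤ ∑' i, (L2inner f (Ψ i)) ^ 2 ∧
    ∑' i, (L2inner f (Ψ i)) ^ 2 ≤ B * ∫ x : ℝ × ℝ, f x ^ 2

/-- `(Ψd i)` is a dual family for `(Ψ i)`: the synthesis operator is bounded and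
one has the reconstruction formula `f = ∑ ⟨f, Ψ i⟩ Ψd i` in `L²`. -/
def IsDualFamily {I : Type*} (Ψ Ψd : I → ℝ × ℝ → ℝ) : Prop :=
  (∃ C : ℝ, 0 < C ∧ ∀ c : I → ℝ, Summable (fun i => (c i) ^ 2) →
    ∃ g : ℝ × ℝ → ℝ, MemLp g 2 (volume : Measure (ℝ × ℝ)) ∧
      HasL2Sum (fun i x => c i * Ψd i x) g ∧
      ∫ x : ℝ × ℝ, g x ^ 2 ≤ C ^ 2 * ∑' i, (c i) ^ 2) ∧
  ∀ f : ℝ × ℝ → ℝ, MemLp f 2 (volume : Measure (ℝ × ℝ)) →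
    Summable (fun i => (L2inner f (Ψ i)) ^ 2) ∧
    HasL2Sum (fun i x => L2inner f (Ψ i) * Ψd i x) f

/-- The metric on the torus `[-π/2, π/2]`. -/
def torusDist (a b : ℝ) : ℝ := min |a - b| (π + min a b - max a b)

/-- The angle `arctan(s^ι)`, with the convention `arctan(1/0) = π/2`. -/
def slopeAngle (ι : ℤ) (s : ℝ) : ℝ :=
  if ι = 1 then arctan s else if s = 0 then π / 2 else arctan s⁻¹

/-- `s^ι`: `s` for `ι = 1` and `1/s` for `ι = -1`. -/
def sPow (ι : ℤ) (s : ℝ) : ℝ := if ι = 1 then s else s⁻¹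

/-- The unit normal of an arclength-parametrized curve: the rotation of the unit
tangent by `π/2`. -/
def normalAt (γ : ℝ → ℝ × ℝ) (s : ℝ) : ℝ × ℝ := (-(deriv γ s).2, (deriv γ s).1)


/-- the Besov seminorm integral of order `1` of the characteristic
function of a region with `C²` boundary diverges, i.e. `χ_B ∉ B¹_{q,q}(ℝ²)`. -/
theorem indicator_not_in_besov
    (B : Set (ℝ × ℝ)) (hBbd : Bornology.IsBounded B)
    (hBint : (interior B).Nonempty)
    (v : ℝ) (hB : IsCartoonRegion 2 v B)
    (q : ℝ) (hq : 1 ≤ q) :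
    ∫⁻ h : ℝ × ℝ,
        ENNReal.ofReal (‖h‖ ^ (-(2 + q))) *
        ∫⁻ x : ℝ × ℝ, ENNReal.ofReal
          (|B.indicator (fun _ => (1:ℝ)) (x + 2 • h) -
            2 * B.indicator (fun _ => (1:ℝ)) (x + h) +
            B.indicator (fun _ => (1:ℝ)) x| ^ q) = ⊤ := by
  classical
  obtain ⟨len, γ, hlen, hγC, hper, hinj, hunit, hcurv, hfront⟩ := hB
  set ind : ℝ × ℝ → ℝ := B.indicator (fun _ => (1:ℝ)) with hind_def
  -- the frontier of `B` is Lebesgue-null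
  have hγdiff : Differentiable ℝ γ := hγC.differentiable (by norm_num)
  have hline : volume ((Set.univ : Set ℝ) ×ˢ ({0} : Set ℝ)) = 0 := by
    rw [Measure.volume_eq_prod, Measure.prod_prod]; simp
  have hrange : Set.range γ
      = (fun z : ℝ × ℝ => γ z.1) '' ((Set.univ : Set ℝ) ×ˢ ({0} : Set ℝ)) := by
    ext y
    constructor
    · rintro ⟨s, rfl⟩; exact ⟨(s, 0), by simp⟩
    · rintro ⟨z, _, rfl⟩; exact ⟨z.1, rfl⟩
  have hfr : volume (frontier B) = 0 := by
    rw [hfront, hrange]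
    exact addHaar_image_eq_zero_of_differentiableOn_of_addHaar_eq_zero
      (μ := (volume : Measure (ℝ × ℝ)))
      ((hγdiff.comp differentiable_fst).differentiableOn) hline
  have hBae : (B : Set (ℝ × ℝ)) =ᵐ[volume] interior B := by
    refine (MeasureTheory.ae_eq_set).2 ⟨?_, ?_⟩
    · exact measure_mono_null (fun x hx => by rw [← closure_diff_interior]; exact ⟨subset_closure hx.1, hx.2⟩) hfr
    · rw [Set.diff_eq_empty.2 interior_subset]; exact measure_empty
  have hindmeas : AEMeasurable ind volume := by
    have hm : Measurable ((interior B).indicator (fun _ => (1:ℝ))) :=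
      measurable_const.indicator isOpen_interior.measurableSet
    exact hm.aemeasurable.congr (indicator_ae_eq_of_ae_eq_set hBae.symm)
  have hshift : ∀ c : ℝ × ℝ, AEMeasurable (fun x => ind (x + c)) volume := fun c =>
    hindmeas.comp_quasiMeasurePreserving
      (measurePreserving_add_right volume c).quasiMeasurePreserving
  have hq0 : (0:ℝ) ≤ q := le_trans zero_le_one hq
  have hφ : Measurable fun t : ℝ => ENNReal.ofReal (|t| ^ q) :=
    ENNReal.measurable_ofReal.comp
      ((Real.continuous_rpow_const hq0).comp continuous_abs).measurable
  have hfh : ∀ h' : ℝ × ℝ, AEMeasurable (fun x : ℝ × ℝ =>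
      ENNReal.ofReal (|ind (x + 2 • h') - 2 * ind (x + h') + ind x| ^ q)) volume := by
    intro h'
    have h0 : AEMeasurable (fun x : ℝ × ℝ =>
        ind (x + 2 • h') - 2 * ind (x + h') + ind x) volume :=
      ((hshift (2 • h')).sub ((hshift h').const_mul 2)).add hindmeas
    exact hφ.comp_aemeasurable h0
  -- geometric data
  obtain ⟨p, hp⟩ := hBint
  obtain ⟨ρ, hρpos, hball⟩ := Metric.isOpen_iff.1 isOpen_interior p hp
  obtain ⟨R, hRsub⟩ := hBbd.subset_closedBall p
  have hpB : p ∈ B := interior_subset hp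
  have hR0 : (0:ℝ) ≤ R := by
    have := hRsub hpB; simpa [Metric.mem_closedBall] using this
  set C : ℝ := R + ρ + 2 with hC
  have hCpos : 0 < C := by positivity
  set c0 : ℝ≥0∞ := volume (Metric.ball p ρ) with hc0
  have hc0pos : c0 ≠ 0 := (Metric.measure_ball_pos volume p hρpos).ne'
  have hc0top : c0 ≠ ⊤ := (measure_ball_lt_top).ne
  set ε : ℝ≥0∞ := c0 * ENNReal.ofReal C⁻¹ with hε
  have hεne : ε ≠ 0 :=
    mul_ne_zero hc0pos (ENNReal.ofReal_pos.2 (inv_pos.2 hCpos)).ne'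
  -- pointwise lower bound on the set of "jumps"
  have claim2 : ∀ (h' y : ℝ × ℝ), ind y ≠ ind (y + h') →
      (1 : ℝ≥0∞) ≤ ENNReal.ofReal (|ind (y + 2 • h') - 2 * ind (y + h') + ind y| ^ q) := by
    intro h' y hy
    have hval : ∀ z, ind z = 0 ∨ ind z = 1 := by
      intro z; by_cases hz : z ∈ B
      · right; simp [hind_def, Set.indicator_of_mem hz]
      · left; simp [hind_def, Set.indicator_of_notMem hz]
    have h1 : (1:ℝ) ≤ |ind (y + 2 • h') - 2 * ind (y + h') + ind y| := by
      rcases hval y with h0 | h0 <;> rcases hval (y + h') with hb | hb <;>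
        rcases hval (y + 2 • h') with hc | hc <;>
        rw [h0, hb] at hy <;> rw [h0, hb, hc, le_abs] <;>
        first
          | (exact absurd rfl hy)
          | norm_num
    have h2 : (1:ℝ) ≤ |ind (y + 2 • h') - 2 * ind (y + h') + ind y| ^ q := by
      calc (1:ℝ) = 1 ^ q := (Real.one_rpow q).symm
        _ ≤ _ := Real.rpow_le_rpow zero_le_one h1 hq0
    calc (1:ℝ≥0∞) = ENNReal.ofReal 1 := ENNReal.ofReal_one.symm
      _ ≤ _ := ENNReal.ofReal_le_ofReal h2
  -- the main lower bound for the inner integral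
  have inner_bd : ∀ h' : ℝ × ℝ, 0 < ‖h'‖ → ‖h'‖ ≤ 1 →
      ε * ENNReal.ofReal ‖h'‖ ≤
        ∫⁻ x : ℝ × ℝ, ENNReal.ofReal (|ind (x + 2 • h') - 2 * ind (x + h') + ind x| ^ q) := by
    intro h' hpos hle
    set Z : Set (ℝ × ℝ) := {y | ind y ≠ ind (y + h')} with hZ
    set N : ℕ := ⌈(R + ρ + 1) / ‖h'‖⌉₊ with hN
    have hNpos : 0 < N := Nat.ceil_pos.2 (by positivity)
    have hNlb : R + ρ + 1 ≤ (N : ℝ) * ‖h'‖ := (div_le_iff₀ hpos).1 (Nat.le_ceil _)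
    have hNub : (N : ℝ) ≤ C / ‖h'‖ := by
      have h1 : ((N : ℝ)) < (R + ρ + 1) / ‖h'‖ + 1 := Nat.ceil_lt_add_one (by positivity)
      have h2 : (1:ℝ) ≤ 1 / ‖h'‖ := by
        rw [le_div_iff₀ hpos]; simpa using hle
      have h3 : (R + ρ + 1) / ‖h'‖ + 1 / ‖h'‖ = C / ‖h'‖ := by
        rw [hC, ← add_div]; ring_nf
      linarith
    have hcover : Metric.ball p ρ ⊆ ⋃ n ∈ Finset.range N, (fun y => y + n • h') ⁻¹' Z := by
      intro x hx
      by_contra hcon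
      simp only [Set.mem_iUnion, Finset.mem_range, Set.mem_preimage, not_exists] at hcon
      have hconst : ∀ n : ℕ, n ≤ N → ind (x + n • h') = ind x := by
        intro n hn
        induction n with
        | zero => simp
        | succ m ih =>
          have hm : m < N := lt_of_lt_of_le (Nat.lt_succ_self m) hn
          have hnotZ := hcon m hm
          have heq : ind (x + m • h') = ind (x + m • h' + h') := by
            by_contra hne
            exact hnotZ hne
          have hstep : x + (m + 1) • h' = x + m • h' + h' := by
            rw [succ_nsmul, ← add_assoc]
          rw [hstep, ← heq, ih (le_of_lt hm)]
      have h1 : ind x = 1 := Set.indicator_of_mem (interior_subset (hball hx)) _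
      have h0 : ind (x + N • h') = 0 := by
        apply Set.indicator_of_notMem
        intro hmem
        have hdist : ‖x + N • h' - p‖ ≤ R := by
          have := hRsub hmem
          rwa [Metric.mem_closedBall, dist_eq_norm] at this
        have hxp : ‖x - p‖ < ρ := by
          rw [← dist_eq_norm]; exact hx
        have hnh : ‖(N:ℕ) • h'‖ = (N : ℝ) * ‖h'‖ := by
          rw [← Nat.cast_smul_eq_nsmul ℝ, norm_smul]; simp
        have hid : (N:ℕ) • h' = (x + N • h' - p) - (x - p) := by abel
        have htri : (N : ℝ) * ‖h'‖ ≤ ‖x + N • h' - p‖ + ‖x - p‖ := by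
          calc (N : ℝ) * ‖h'‖ = ‖(N:ℕ) • h'‖ := hnh.symm
            _ = ‖(x + N • h' - p) - (x - p)‖ := by rw [← hid]
            _ ≤ ‖x + N • h' - p‖ + ‖x - p‖ := norm_sub_le _ _
        linarith
      have := hconst N le_rfl
      rw [h0, h1] at this
      norm_num at this
    have hmeas1 : c0 ≤ (N : ℝ≥0∞) * volume Z := by
      calc c0 ≤ volume (⋃ n ∈ Finset.range N, (fun y => y + n • h') ⁻¹' Z) :=
            measure_mono hcover
        _ ≤ ∑ n ∈ Finset.range N, volume ((fun y => y + n • h') ⁻¹' Z) :=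
            measure_biUnion_finset_le _ _
        _ = ∑ _n ∈ Finset.range N, volume Z := by
            refine Finset.sum_congr rfl fun n _ => ?_
            exact measure_preimage_add_right volume (n • h') Z
        _ = (N : ℝ≥0∞) * volume Z := by
            rw [Finset.sum_const, Finset.card_range, nsmul_eq_mul]
    have hkey : ε * ENNReal.ofReal ‖h'‖ ≤ volume Z := by
      rw [← ENNReal.mul_le_mul_iff_right (a := (N:ℝ≥0∞)) (by exact_mod_cast hNpos.ne')
        (by simp)]
      refine le_trans ?_ hmeas1
      rw [hε]
      calc (N:ℝ≥0∞) * (c0 * ENNReal.ofReal C⁻¹ * ENNReal.ofReal ‖h'‖)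
          = c0 * ((N:ℝ≥0∞) * ENNReal.ofReal (C⁻¹ * ‖h'‖)) := by
            rw [ENNReal.ofReal_mul (by positivity)]; ring
        _ ≤ c0 * 1 := by
            refine mul_le_mul_right ?_ c0
            rw [← ENNReal.ofReal_natCast N, ← ENNReal.ofReal_mul (by positivity)]
            have hreal : (N:ℝ) * (C⁻¹ * ‖h'‖) ≤ 1 := by
              have h4 := mul_le_mul_of_nonneg_right hNub
                (by positivity : (0:ℝ) ≤ C⁻¹ * ‖h'‖)
              calc (N:ℝ) * (C⁻¹ * ‖h'‖) ≤ (C / ‖h'‖) * (C⁻¹ * ‖h'‖) := h4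
                _ = 1 := by field_simp
            calc ENNReal.ofReal ((N:ℝ) * (C⁻¹ * ‖h'‖)) ≤ ENNReal.ofReal 1 :=
                ENNReal.ofReal_le_ofReal hreal
              _ = 1 := ENNReal.ofReal_one
        _ = c0 := mul_one _
    have hsub : Z ⊆ {x : ℝ × ℝ |
        (1:ℝ≥0∞) ≤ ENNReal.ofReal (|ind (x + 2 • h') - 2 * ind (x + h') + ind x| ^ q)} :=
      fun y hy => claim2 h' y hy
    calc ε * ENNReal.ofReal ‖h'‖ ≤ volume Z := hkey
      _ ≤ volume {x : ℝ × ℝ |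
          (1:ℝ≥0∞) ≤ ENNReal.ofReal (|ind (x + 2 • h') - 2 * ind (x + h') + ind x| ^ q)} :=
          measure_mono hsub
      _ ≤ ∫⁻ x : ℝ × ℝ, ENNReal.ofReal (|ind (x + 2 • h') - 2 * ind (x + h') + ind x| ^ q) := by
          simpa using mul_meas_ge_le_lintegral₀ (hfh h') 1
  -- dyadic annuli
  set r : ℕ → ℝ := fun k => (1/2 : ℝ) ^ k with hr
  have hrpos : ∀ k, 0 < r k := fun k => by positivity
  have hrle1 : ∀ k, r k ≤ 1 := fun k => pow_le_one₀ (by norm_num) (by norm_num)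
  set A : ℕ → Set (ℝ × ℝ) := fun k => {h' | r (k+1) < ‖h'‖ ∧ ‖h'‖ ≤ r k} with hA
  have hAmeas : ∀ k, MeasurableSet (A k) := by
    intro k
    have : A k = (fun h' : ℝ × ℝ => ‖h'‖) ⁻¹' (Set.Ioc (r (k+1)) (r k)) := rfl
    rw [this]
    exact measurable_norm measurableSet_Ioc
  have hdisjaux : ∀ k l, k < l → Disjoint (A k) (A l) := by
    intro k l hlt
    refine Set.disjoint_left.2 fun h' hk hl => ?_
    have h1 : r l ≤ r (k+1) :=
      pow_le_pow_of_le_one (by norm_num) (by norm_num) (by omega)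
    exact lt_irrefl ‖h'‖ (lt_of_le_of_lt (hl.2.trans h1) hk.1)
  have hdisj : Pairwise (Function.onFun Disjoint A) := by
    intro k l hkl
    rcases lt_or_gt_of_ne hkl with hlt | hlt
    · exact hdisjaux k l hlt
    · exact (hdisjaux l k hlt).symm
  have hAvol : ∀ k, ENNReal.ofReal (3 * r k ^ 2) ≤ volume (A k) := by
    intro k
    have hsub : Metric.ball (0:ℝ × ℝ) (r k) \ Metric.closedBall 0 (r (k+1)) ⊆ A k := by
      intro h' hh
      constructor
      · have h2 := hh.2
        simp only [Metric.mem_closedBall, not_le, dist_zero_right] at h2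
        exact h2
      · have h2 := hh.1
        rw [Metric.mem_ball, dist_zero_right] at h2
        exact h2.le
    refine le_trans ?_ (measure_mono hsub)
    have hballvol : volume (Metric.ball (0:ℝ × ℝ) (r k)) = ENNReal.ofReal (4 * r k ^ 2) := by
      have : Metric.ball (0:ℝ × ℝ) (r k)
          = Metric.ball (0:ℝ) (r k) ×ˢ Metric.ball (0:ℝ) (r k) :=
        (ball_prod_same (0:ℝ) (0:ℝ) (r k)).symm
      rw [this, Measure.volume_eq_prod, Measure.prod_prod, Real.volume_ball,
        ← ENNReal.ofReal_mul (by positivity)]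
      congr 1; ring
    have hcbvol : volume (Metric.closedBall (0:ℝ × ℝ) (r (k+1)))
        = ENNReal.ofReal (r k ^ 2) := by
      have hhalf : r (k+1) = r k / 2 := by
        simp only [hr, pow_succ]; ring
      have : Metric.closedBall (0:ℝ × ℝ) (r (k+1))
          = Metric.closedBall (0:ℝ) (r (k+1)) ×ˢ Metric.closedBall (0:ℝ) (r (k+1)) :=
        (closedBall_prod_same (0:ℝ) (0:ℝ) (r (k+1))).symm
      rw [this, Measure.volume_eq_prod, Measure.prod_prod, Real.volume_closedBall,
        ← ENNReal.ofReal_mul (by positivity), hhalf]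
      congr 1; ring
    have hunion : volume (Metric.ball (0:ℝ × ℝ) (r k)) ≤
        volume (Metric.ball (0:ℝ × ℝ) (r k) \ Metric.closedBall 0 (r (k+1)))
          + volume (Metric.closedBall (0:ℝ × ℝ) (r (k+1))) := by
      refine le_trans (measure_mono ?_) (measure_union_le _ _)
      intro x hx
      by_cases hx2 : x ∈ Metric.closedBall (0:ℝ × ℝ) (r (k+1))
      · exact Or.inr hx2
      · exact Or.inl ⟨hx, hx2⟩
    rw [hballvol, hcbvol] at hunion
    have h3 : ENNReal.ofReal (4 * r k ^ 2) - ENNReal.ofReal (r k ^ 2)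
        ≤ volume (Metric.ball (0:ℝ × ℝ) (r k) \ Metric.closedBall 0 (r (k+1))) :=
      tsub_le_iff_right.2 hunion
    rwa [← ENNReal.ofReal_sub _ (by positivity), show 4 * r k ^ 2 - r k ^ 2 = 3 * r k ^ 2 by ring]
      at h3
  -- the integral over each annulus is at least ε
  have hAint : ∀ k, ε ≤ ∫⁻ h' in A k,
      ENNReal.ofReal (‖h'‖ ^ (-(2 + q))) *
        ∫⁻ x : ℝ × ℝ, ENNReal.ofReal (|ind (x + 2 • h') - 2 * ind (x + h') + ind x| ^ q) := by
    intro k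
    have hconstbd : ∀ h' ∈ A k, ε * ENNReal.ofReal (r k ^ (-(1+q))) ≤
        ENNReal.ofReal (‖h'‖ ^ (-(2 + q))) *
          ∫⁻ x : ℝ × ℝ, ENNReal.ofReal (|ind (x + 2 • h') - 2 * ind (x + h') + ind x| ^ q) := by
      intro h' hh
      have hpos : 0 < ‖h'‖ := lt_trans (hrpos (k+1)) hh.1
      have hle1 : ‖h'‖ ≤ 1 := hh.2.trans (hrle1 k)
      have h1 := inner_bd h' hpos hle1
      have hxp : ‖h'‖ ^ (-(2+q)) * ‖h'‖ = ‖h'‖ ^ (-(1+q)) := by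
        nth_rewrite 2 [← Real.rpow_one ‖h'‖]
        rw [← Real.rpow_add hpos]
        congr 1; ring
      calc ε * ENNReal.ofReal (r k ^ (-(1+q)))
          ≤ ε * ENNReal.ofReal (‖h'‖ ^ (-(1+q))) :=
            mul_le_mul_right (ENNReal.ofReal_le_ofReal
              (Real.rpow_le_rpow_of_nonpos hpos hh.2 (by linarith))) ε
        _ = ENNReal.ofReal (‖h'‖ ^ (-(2+q))) * (ε * ENNReal.ofReal ‖h'‖) := by
            rw [← hxp, ENNReal.ofReal_mul (by positivity)]; ring
        _ ≤ ENNReal.ofReal (‖h'‖ ^ (-(2+q))) *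
              ∫⁻ x : ℝ × ℝ, ENNReal.ofReal (|ind (x + 2 • h') - 2 * ind (x + h') + ind x| ^ q) :=
            mul_le_mul_right h1 _
    have hone : (1:ℝ≥0∞) ≤ ENNReal.ofReal (r k ^ (-(1+q))) * ENNReal.ofReal (3 * r k ^ 2) := by
      rw [← ENNReal.ofReal_mul (by positivity)]
      refine ENNReal.one_le_ofReal.2 ?_
      have h2 : (1:ℝ) ≤ r k ^ (1 - q) :=
        Real.one_le_rpow_of_pos_of_le_one_of_nonpos (hrpos k) (hrle1 k) (by linarith)
      have h3 : r k ^ (-(1+q)) * (3 * r k ^ 2) = 3 * r k ^ (1 - q) := by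
        calc r k ^ (-(1+q)) * (3 * r k ^ 2)
            = 3 * (r k ^ (-(1+q)) * r k ^ ((2:ℕ):ℝ)) := by
              rw [Real.rpow_natCast]; ring
          _ = 3 * r k ^ (-(1+q) + ((2:ℕ):ℝ)) := by rw [Real.rpow_add (hrpos k)]
          _ = 3 * r k ^ (1 - q) := by
              congr 1; push_cast; ring
      rw [h3]; linarith
    calc ε = ε * 1 := (mul_one ε).symm
      _ ≤ ε * (ENNReal.ofReal (r k ^ (-(1+q))) * ENNReal.ofReal (3 * r k ^ 2)) :=
          mul_le_mul_right hone ε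
      _ = ε * ENNReal.ofReal (r k ^ (-(1+q))) * ENNReal.ofReal (3 * r k ^ 2) :=
          (mul_assoc ε _ _).symm
      _ ≤ ε * ENNReal.ofReal (r k ^ (-(1+q))) * volume (A k) :=
          mul_le_mul_right (hAvol k) _
      _ = ∫⁻ _ in A k, (ε * ENNReal.ofReal (r k ^ (-(1+q)))) := (setLIntegral_const _ _).symm
      _ ≤ ∫⁻ h' in A k,
            ENNReal.ofReal (‖h'‖ ^ (-(2 + q))) *
              ∫⁻ x : ℝ × ℝ, ENNReal.ofReal (|ind (x + 2 • h') - 2 * ind (x + h') + ind x| ^ q) := by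
          refine lintegral_mono_ae ?_
          exact (ae_restrict_iff' (hAmeas k)).2 (Filter.Eventually.of_forall fun h' hh =>
            hconstbd h' hh)
  -- summing up
  rw [eq_top_iff]
  calc (⊤:ℝ≥0∞) = ∑' _k : ℕ, ε := (ENNReal.tsum_const_eq_top_of_ne_zero hεne).symm
    _ ≤ ∑' k : ℕ, ∫⁻ h' in A k,
          ENNReal.ofReal (‖h'‖ ^ (-(2 + q))) *
            ∫⁻ x : ℝ × ℝ, ENNReal.ofReal (|ind (x + 2 • h') - 2 * ind (x + h') + ind x| ^ q) :=
        ENNReal.tsum_le_tsum hAint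
    _ = ∫⁻ h' in ⋃ k, A k,
          ENNReal.ofReal (‖h'‖ ^ (-(2 + q))) *
            ∫⁻ x : ℝ × ℝ, ENNReal.ofReal (|ind (x + 2 • h') - 2 * ind (x + h') + ind x| ^ q) :=
        (lintegral_iUnion hAmeas hdisj _).symm
    _ ≤ ∫⁻ h' : ℝ × ℝ,
          ENNReal.ofReal (‖h'‖ ^ (-(2 + q))) *
            ∫⁻ x : ℝ × ℝ, ENNReal.ofReal (|ind (x + 2 • h') - 2 * ind (x + h') + ind x| ^ q) :=
        setLIntegral_le_lintegral _ _

end
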